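/- There exists a PB instance with one voter and strict preferences in which no outcome satisfies CPSC: one voter with strict preferences a ≻ b ≻ c ≻ d, budget L = 4, and weights w(a) = 3, w(b) = w(c) = w(d) = 2 admits no CPSC outcome. -/
import Mathlib


open Finset
open scoped Classical

noncomputable section

/-- Each voter's weak preference relation `pref i` is a total preorder. -/
def TotalPreorder {V C : Type} (pref : V → C → C → Prop) : Prop :=
  (∀ i a b, pref i a b ∨ pref i b a) ∧
  (∀ i a b c, pref i a b → pref i b c → pref i a c)

/-- `nth i j` is voter `i`'s `(j+1)`-th most preferred candidate under a fixed
tie-breaking: an enumeration of all candidates consistent with `pref i`. -/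
def TieBreak {V C : Type} [Fintype C] (pref : V → C → C → Prop) (nth : V → ℕ → C) : Prop :=
  (∀ i c, ∃ j, j < Fintype.card C ∧ nth i j = c) ∧
  (∀ i j j', j ≤ j' → pref i (nth i j) (nth i j'))

/-- `N'` solidly supports `C'`: every voter in `N'` weakly prefers every member of `C'`
to every non-member. -/
def Solid {V C : Type} (pref : V → C → C → Prop) (N' : Finset V) (C' : Finset C) : Prop :=
  ∀ i ∈ N', ∀ c' ∈ C', ∀ c, c ∉ C' → pref i c' c

/-- `P(N',C') = {c : ∃ i ∈ N', c ≿_i c^{(i,|C'|)}}` where `c^{(i,j)} = nth i (j-1)`. -/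
def Pset {V C : Type} [Fintype C] (pref : V → C → C → Prop) (nth : V → ℕ → C)
    (N' : Finset V) (C' : Finset C) : Finset C :=
  Finset.univ.filter fun c => ∃ i ∈ N', pref i c (nth i (C'.card - 1))

/-- total cost of a set of candidates -/
def cost {C : Type} (w : C → ℝ) (S : Finset C) : ℝ := ∑ c ∈ S, w c

/-- Comparative PSC for PB with general (weak) preferences. -/
def CPSC {V C : Type} [Fintype V] [Fintype C] (pref : V → C → C → Prop) (nth : V → ℕ → C)
    (b : V → ℝ) (w : C → ℝ) (L : ℝ) (W : Finset C) : Prop :=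
  ¬ ∃ (N' : Finset V) (C' : Finset C), Solid pref N' C' ∧
      cost w (Pset pref nth N' C' ∩ W) < (∑ i ∈ N', b i) * L / (Fintype.card V : ℝ) ∧
      ∃ C'' ⊆ C', cost w (Pset pref nth N' C' ∩ W) < cost w C'' ∧
        cost w C'' ≤ (∑ i ∈ N', b i) * L / (Fintype.card V : ℝ)

/-- Inclusion PSC for PB with general (weak) preferences. -/
def IPSC {V C : Type} [Fintype V] [Fintype C] (pref : V → C → C → Prop) (nth : V → ℕ → C)
    (b : V → ℝ) (w : C → ℝ) (L : ℝ) (W : Finset C) : Prop :=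
  ¬ ∃ (N' : Finset V) (C' : Finset C), Solid pref N' C' ∧
      cost w (Pset pref nth N' C' ∩ W) < (∑ i ∈ N', b i) * L / (Fintype.card V : ℝ) ∧
      ∃ c ∈ C', c ∉ Pset pref nth N' C' ∩ W ∧
        cost w (insert c (Pset pref nth N' C' ∩ W)) ≤ (∑ i ∈ N', b i) * L / (Fintype.card V : ℝ)

/-- `W` is exhaustive w.r.t. budget limit `L`. -/
def Exhaustive {C : Type} (w : C → ℝ) (L : ℝ) (W : Finset C) : Prop :=
  cost w W ≤ L ∧ ∀ c, c ∉ W → L < cost w (insert c W)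

/-- `W` is a maximal cost outcome w.r.t. budget limit `L`. -/
def MaximalCost {C : Type} (w : C → ℝ) (L : ℝ) (W : Finset C) : Prop :=
  cost w W ≤ L ∧ ∀ C' : Finset C, cost w C' ≤ L → cost w C' ≤ cost w W

/-- dichotomous preferences with approval sets `A i` -/
def Dichotomous {V C : Type} (pref : V → C → C → Prop) (A : V → Finset C) : Prop :=
  ∀ i a c, pref i a c ↔ (a ∈ A i ∨ c ∉ A i)

/-- `⋃_{i ∈ N'} A i` -/
def unionA {V C : Type} [Fintype C] (A : V → Finset C) (N' : Finset V) : Finset C :=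
  Finset.univ.filter fun c => ∃ i ∈ N', c ∈ A i

/-- `⋂_{i ∈ N'} A i` -/
def interA {V C : Type} [Fintype C] (A : V → Finset C) (N' : Finset V) : Finset C :=
  Finset.univ.filter fun c => ∀ i ∈ N', c ∈ A i

/-- the single voter's strict preference a ≻ b ≻ c ≻ d (a=0,b=1,c=2,d=3) -/
def pref6 : Fin 1 → Fin 4 → Fin 4 → Prop := fun _ a c => a ≤ c

/-- tie-breaking enumeration for the strict order -/
def nth6 : Fin 1 → ℕ → Fin 4 := fun _ j => ⟨min j 3, by omega⟩

/-- costs w(a)=3, w(b)=w(c)=w(d)=2 -/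
def w6 : Fin 4 → ℝ := ![3, 2, 2, 2]

/-- with one voter, strict preferences a ≻ b ≻ c ≻ d, L = 4 and
weights (3,2,2,2), no feasible outcome satisfies CPSC. -/
theorem no_cpsc_outcome :
    TotalPreorder pref6 ∧ TieBreak pref6 nth6 ∧
    ∀ W : Finset (Fin 4), cost w6 W ≤ 4 →
      ¬ CPSC pref6 nth6 (fun _ => (1 : ℝ)) w6 4 W := by
  refine ⟨⟨fun _ a b => le_total a b, fun _ a b c => le_trans⟩, ⟨?_, ?_⟩, ?_⟩
  · intro i c
    refine ⟨c.val, by simpa using c.isLt, ?_⟩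
    simp only [nth6]
    ext
    have := c.isLt
    simp; omega
  · intro i j j' hjj'
    simp only [pref6, nth6, Fin.le_def]
    omega
  · intro W hW hC
    apply hC; clear hC
    have hquota : (∑ i ∈ ({0} : Finset (Fin 1)), (1:ℝ)) * 4 / (Fintype.card (Fin 1) : ℝ) = 4 := by
      simp
    by_cases h0 : (0 : Fin 4) ∈ W
    · -- then 1 ∉ W and 2 ∉ W (else cost > 4)
      have key : ∀ x : Fin 4, x ≠ 0 → x ∈ W → False := by
        intro x hx hxW
        have hsub : ({0, x} : Finset (Fin 4)) ⊆ W := by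
          simp [Finset.insert_subset_iff, h0, hxW]
        have hle : cost w6 {0, x} ≤ cost w6 W := by
          apply Finset.sum_le_sum_of_subset_of_nonneg hsub
          intro c _ _; fin_cases c <;> norm_num [w6]
        have he : cost w6 ({0, x} : Finset (Fin 4)) ≥ 5 := by
          fin_cases x <;> simp_all [cost, w6] <;> norm_num
        linarith
      have h1 : (1 : Fin 4) ∉ W := fun h => key 1 (by decide) h
      have h2 : (2 : Fin 4) ∉ W := fun h => key 2 (by decide) h
      refine ⟨{0}, {0, 1, 2}, ?_, ?_⟩
      · intro i hi c' hc' c hc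
        simp only [pref6, Fin.le_def]
        fin_cases c <;> simp_all <;> omega
      · suffices h : ∀ S : Finset (Fin 4), S = {0} →
            cost w6 S < (∑ i ∈ ({0} : Finset (Fin 1)), (fun _ => (1:ℝ)) i) * 4 /
              (Fintype.card (Fin 1) : ℝ) ∧
            ∃ C'' ⊆ ({0, 1, 2} : Finset (Fin 4)), cost w6 S < cost w6 C'' ∧
              cost w6 C'' ≤ (∑ i ∈ ({0} : Finset (Fin 1)), (fun _ => (1:ℝ)) i) * 4 /
                (Fintype.card (Fin 1) : ℝ) by
          refine h _ ?_
          ext c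
          fin_cases c <;>
            simp [Pset, pref6, nth6, Fin.le_def, h0, h1, h2] <;> omega
        rintro S rfl
        refine ⟨?_, {1, 2}, by decide, ?_, ?_⟩ <;> simp [cost, w6] <;> norm_num
    · refine ⟨{0}, {0}, ?_, ?_⟩
      · intro i hi c' hc' c hc
        simp only [Finset.mem_singleton] at hc'
        subst hc'
        simp [pref6, Fin.le_def]
      · suffices h : ∀ S : Finset (Fin 4), S = ∅ →
            cost w6 S < (∑ i ∈ ({0} : Finset (Fin 1)), (fun _ => (1:ℝ)) i) * 4 /
              (Fintype.card (Fin 1) : ℝ) ∧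
            ∃ C'' ⊆ ({0} : Finset (Fin 4)), cost w6 S < cost w6 C'' ∧
              cost w6 C'' ≤ (∑ i ∈ ({0} : Finset (Fin 1)), (fun _ => (1:ℝ)) i) * 4 /
                (Fintype.card (Fin 1) : ℝ) by
          refine h _ ?_
          ext c
          fin_cases c <;>
            simp [Pset, pref6, nth6, Fin.le_def, h0] <;> omega
        rintro S rfl
        refine ⟨?_, {0}, by decide, ?_, ?_⟩ <;> simp [cost, w6] <;> norm_num
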